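/- Let k be a field, let F = FreeAlgebra k (Fin 2) be the free associative k-algebra on two generators x and y, and let A = F / I where I is the two-sided ideal of F generated by {x², y², x*y, y*x}. Then A is representation-infinite: there exists an infinite family of A-modules, each finite-dimensional over k and indecomposable, that are pairwise non-isomorphic. -/

import Mathlib

/-- The quotient of a ring by a ring congruence (e.g. by a two-sided ideal) of a
`k`-algebra is again a `k`-algebra. -/
noncomputable instance ringConQuotientAlgebra {k R : Type*} [CommSemiring k] [Semiring R]
    [Algebra k R] (c : RingCon R) : Algebra k c.Quotient where
  algebraMap := (RingCon.mk' c).comp (algebraMap k R)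
  commutes' r x := by
    obtain ⟨a⟩ := x
    show ((algebraMap k R r : R) : c.Quotient) * (a : c.Quotient)
        = (a : c.Quotient) * ((algebraMap k R r : R) : c.Quotient)
    rw [← RingCon.coe_mul, ← RingCon.coe_mul, Algebra.commutes]
  smul_def' r x := by
    obtain ⟨a⟩ := x
    show r • (a : c.Quotient) = ((algebraMap k R r : R) : c.Quotient) * (a : c.Quotient)
    rw [← RingCon.coe_smul, ← RingCon.coe_mul, Algebra.smul_def]

/-- The two-sided ideal of the free algebra `k⟨x,y⟩` generated by `x², y², xy, yx`. -/
noncomputable def gentleLocalIdeal (k : Type u) [Field k] :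
    TwoSidedIdeal (FreeAlgebra k (Fin 2)) :=
  TwoSidedIdeal.span
    {FreeAlgebra.ι k (0 : Fin 2) * FreeAlgebra.ι k (0 : Fin 2),
     FreeAlgebra.ι k (1 : Fin 2) * FreeAlgebra.ι k (1 : Fin 2),
     FreeAlgebra.ι k (0 : Fin 2) * FreeAlgebra.ι k (1 : Fin 2),
     FreeAlgebra.ι k (1 : Fin 2) * FreeAlgebra.ι k (0 : Fin 2)}

/-- The algebra `A = k⟨x,y⟩/(x², y², xy, yx)`. -/
abbrev GentleLocalAlgebra (k : Type u) [Field k] : Type u :=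
  (gentleLocalIdeal k).ringCon.Quotient

/-- A module is *indecomposable* if it is nonzero and is not the internal direct sum of
two nonzero submodules. -/
def IndecomposableModule (R : Type*) [Ring R] (M : Type*) [AddCommGroup M] [Module R M] :
    Prop :=
  Nontrivial M ∧
    ∀ M₁ M₂ : Submodule R M, M₁ ⊓ M₂ = ⊥ → M₁ ⊔ M₂ = ⊤ → M₁ = ⊥ ∨ M₂ = ⊥


namespace GentleRep

variable {k : Type u} [Field k] {n : ℕ}

/-- The nilpotent shift operator on `k^(n+1)`: `e_i ↦ e_{i+1}`. -/
noncomputable def J : (Fin (n+1) → k) →ₗ[k] (Fin (n+1) → k) where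
  toFun u i := if h : 0 < (i : ℕ) then u ⟨(i : ℕ) - 1, by omega⟩ else 0
  map_add' u v := by funext i; by_cases h : 0 < (i : ℕ) <;> simp only [Pi.add_apply, h, ↓reduceDIte, add_zero]
  map_smul' c u := by funext i; by_cases h : 0 < (i : ℕ) <;> simp only [Pi.smul_apply, RingHom.id_apply, h, ↓reduceDIte, smul_zero]

/-- Backward shift. -/
noncomputable def K : (Fin (n+1) → k) →ₗ[k] (Fin (n+1) → k) where
  toFun u i := if h : (i : ℕ) < n then u ⟨(i : ℕ) + 1, by omega⟩ else 0
  map_add' u v := by funext i; by_cases h : (i : ℕ) < n <;> simp [h]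
  map_smul' c u := by funext i; by_cases h : (i : ℕ) < n <;> simp [h]

lemma J_apply_zero (u : Fin (n+1) → k) : J u 0 = 0 := by
  simp [J]

lemma decomp (v : Fin (n+1) → k) :
    v = v 0 • (Pi.single 0 1 : Fin (n+1) → k) + J (K v) := by
  funext i
  by_cases h : (i : ℕ) = 0
  · have hi : i = 0 := Fin.ext h
    subst hi
    simp [J]
  · have h0 : i ≠ 0 := fun hh => h (by simp [hh])
    have hpos : 0 < (i : ℕ) := Nat.pos_of_ne_zero h
    have hlt : (i : ℕ) - 1 < n := by omega
    simp only [Pi.add_apply, Pi.smul_apply, Pi.single_eq_of_ne h0, smul_zero, zero_add]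
    show _ = (if h : 0 < (i : ℕ) then (K v) ⟨(i : ℕ) - 1, by omega⟩ else 0)
    rw [dif_pos hpos]
    show _ = (if h : (i : ℕ) - 1 < n then v ⟨(i : ℕ) - 1 + 1, by omega⟩ else 0)
    rw [dif_pos hlt]
    congr 1
    exact Fin.ext (by simp; omega)

lemma Jpow_apply (t : ℕ) (v : Fin (n+1) → k) (i : Fin (n+1)) (hi : (i : ℕ) < t) :
    ((J : Module.End k (Fin (n+1) → k)) ^ t) v i = 0 := by
  induction t generalizing v i with
  | zero => omega
  | succ t ih =>
    rw [pow_succ']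
    show J (((J : Module.End k (Fin (n+1) → k)) ^ t) v) i = 0
    show (if h : 0 < (i : ℕ) then (((J : Module.End k (Fin (n+1) → k)) ^ t) v) ⟨(i:ℕ)-1, by omega⟩ else 0) = 0
    by_cases h : 0 < (i : ℕ)
    · rw [dif_pos h]; exact ih v _ (by simp; omega)
    · rw [dif_neg h]

lemma Jpow_top : ((J : Module.End k (Fin (n+1) → k)) ^ (n+1)) = 0 := by
  apply LinearMap.ext; intro v; funext i
  exact Jpow_apply (n+1) v i i.isLt

end GentleRep

namespace GentleRep

variable {k : Type u} [Field k] {n : ℕ}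

lemma apply_zero (a : Module.End k (Fin (n+1) → k)) (hJ : a * J = J * a)
    (v : Fin (n+1) → k) :
    a v 0 = a (Pi.single 0 1) 0 * v 0 := by
  conv_lhs => rw [decomp v]
  rw [map_add, map_smul]
  have h1 : a (J (K v)) = J (a (K v)) := by
    rw [← Module.End.mul_apply, hJ, Module.End.mul_apply]
  rw [h1]
  simp [J_apply_zero, mul_comm]

/-- If an idempotent `k`-endomorphism of `k^{n+1}` commutes with the shift `J`,
then it is `0` or `1`. -/
lemma idempotent_of_comm_shift (a : Module.End k (Fin (n+1) → k))
    (hJ : a * J = J * a) (ha : a * a = a) :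
    a = 0 ∨ a = 1 := by
  set c : k := a (Pi.single 0 1) 0 with hc
  set N : Module.End k (Fin (n+1) → k) := a - algebraMap k _ c with hN
  have hNJ : N * J = (J : Module.End k (Fin (n+1) → k)) * N := by
    rw [hN, sub_mul, mul_sub, hJ, Algebra.commutes]
  have hN0 : ∀ v : Fin (n+1) → k, N v 0 = 0 := by
    intro v
    have hv : N v = a v - c • v := by
      rw [hN]; simp [Module.algebraMap_end_apply]
    rw [hv]
    simp [apply_zero a hJ v, hc]
  have hNr : ∀ v : Fin (n+1) → k, ∃ w, N v = J w := by
    intro v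
    refine ⟨K (N v), ?_⟩
    conv_lhs => rw [decomp (N v)]
    rw [hN0 v, zero_smul, zero_add]
  have hNpow : ∀ t (v : Fin (n+1) → k), ∃ w,
      (N ^ t) v = ((J : Module.End k (Fin (n+1) → k)) ^ t) w := by
    intro t
    induction t with
    | zero => intro v; exact ⟨v, rfl⟩
    | succ t ih =>
      intro v
      obtain ⟨w, hw⟩ := ih v
      obtain ⟨w', hw'⟩ := hNr w
      refine ⟨w', ?_⟩
      have comm : N * (J : Module.End k (Fin (n+1) → k)) ^ t
          = (J : Module.End k (Fin (n+1) → k)) ^ t * N := Commute.pow_right hNJ t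
      calc (N ^ (t+1)) v = (N * N ^ t) v := by rw [pow_succ']
        _ = N ((N ^ t) v) := Module.End.mul_apply _ _ _
        _ = N (((J : Module.End k (Fin (n+1) → k)) ^ t) w) := by rw [hw]
        _ = ((J : Module.End k (Fin (n+1) → k)) ^ t) (N w) := by
              rw [← Module.End.mul_apply, comm, Module.End.mul_apply]
        _ = ((J : Module.End k (Fin (n+1) → k)) ^ t) (J w') := by rw [hw']
        _ = ((J : Module.End k (Fin (n+1) → k)) ^ (t+1)) w' := by
              rw [pow_succ, Module.End.mul_apply]
  have hNnil : N ^ (n+1) = 0 := by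
    apply LinearMap.ext; intro v
    obtain ⟨w, hw⟩ := hNpow (n+1) v
    rw [hw, Jpow_top]
    rfl
  have hcomm : a * algebraMap k (Module.End k (Fin (n+1) → k)) c
      = algebraMap k (Module.End k (Fin (n+1) → k)) c * a := (Algebra.commutes c a).symm
  set D : Module.End k (Fin (n+1) → k) := algebraMap k _ c with hD
  have hmap1 : algebraMap k (Module.End k (Fin (n+1) → k)) (1 - 2*c) = 1 - (D + D) := by
    rw [map_sub, map_one, map_mul, map_ofNat, hD, ← two_mul, two_mul]
  have hmap2 : algebraMap k (Module.End k (Fin (n+1) → k)) (c - c^2) = D - D*D := by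
    rw [map_sub, map_pow, hD, pow_two]
  have key : N * N - algebraMap k (Module.End k (Fin (n+1) → k)) (1 - 2*c) * N
      = algebraMap k (Module.End k (Fin (n+1) → k)) (c - c^2) := by
    rw [hmap1, hmap2, hN]
    simp only [sub_mul, mul_sub, add_mul, one_mul]
    rw [ha, hcomm]
    abel
  have hfaith : Function.Injective (algebraMap k (Module.End k (Fin (n+1) → k))) := by
    intro r s hrs
    have h0 := congrArg (fun f : Module.End k (Fin (n+1) → k) =>
      f (Pi.single (0 : Fin (n+1)) (1:k)) (0 : Fin (n+1))) hrs
    simpa using h0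
  have hc2 : c - c^2 = 0 := by
    have hfac : N * N - algebraMap k (Module.End k (Fin (n+1) → k)) (1 - 2*c) * N
        = (N - algebraMap k (Module.End k (Fin (n+1) → k)) (1 - 2*c)) * N :=
      (sub_mul N (algebraMap k (Module.End k (Fin (n+1) → k)) (1 - 2*c)) N).symm
    have hcm : Commute (N - algebraMap k (Module.End k (Fin (n+1) → k)) (1 - 2*c)) N :=
      Commute.sub_left (Commute.refl N) (Algebra.commutes _ _)
    have hpow0 : (algebraMap k (Module.End k (Fin (n+1) → k)) (c - c^2)) ^ (n+1) = 0 := by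
      rw [← key, hfac, hcm.mul_pow, hNnil, mul_zero]
    rw [← map_pow] at hpow0
    have hz : (c - c^2) ^ (n+1) = 0 := hfaith (by rw [hpow0, map_zero])
    exact pow_eq_zero_iff (Nat.succ_ne_zero n) |>.mp hz
  have key2 : N * N = algebraMap k (Module.End k (Fin (n+1) → k)) (1 - 2*c) * N := by
    have hk := key
    rw [hc2, map_zero, sub_eq_zero] at hk
    exact hk
  have hNt : ∀ t, N ^ (t+1) = algebraMap k (Module.End k (Fin (n+1) → k)) ((1 - 2*c)^t) * N := by
    intro t
    induction t with
    | zero => simp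
    | succ t ih =>
      rw [pow_succ, ih, mul_assoc, key2, ← mul_assoc, ← map_mul, ← pow_succ]
  have hcc : c = 0 ∨ c = 1 := by
    have hfac : c * (c - 1) = 0 := by linear_combination -hc2
    rcases mul_eq_zero.mp hfac with h | h
    · exact Or.inl h
    · exact Or.inr (sub_eq_zero.mp h)
  have hε : (1 - 2*c) ≠ 0 := by
    rcases hcc with h | h <;> rw [h] <;> norm_num
  have hNzero : N = 0 := by
    have h := hNt n
    rw [hNnil] at h
    have h1 : algebraMap k (Module.End k (Fin (n+1) → k)) (((1-2*c)^n)⁻¹)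
        * (algebraMap k (Module.End k (Fin (n+1) → k)) ((1-2*c)^n) * N) = 0 := by
      rw [← h, mul_zero]
    rwa [← mul_assoc, ← map_mul, inv_mul_cancel₀ (pow_ne_zero _ hε), map_one, one_mul] at h1
  have haC : a = algebraMap k (Module.End k (Fin (n+1) → k)) c := by
    have h := hNzero
    rw [hN, sub_eq_zero] at h
    exact h
  rcases hcc with h | h
  · left; rw [haC, h, map_zero]
  · right; rw [haC, h, map_one]

end GentleRep

set_option synthInstance.maxHeartbeats 1000000
set_option maxHeartbeats 1000000
namespace GentleRep

variable (k : Type u) [Field k] (n : ℕ)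

/-- The operator `x`: `(u, v) ↦ (0, u)`. -/
noncomputable def Xop : Module.End k ((Fin (n+1) → k) × (Fin (n+1) → k)) :=
  (LinearMap.inr k _ _).comp (LinearMap.fst k _ _)

/-- The operator `y`: `(u, v) ↦ (0, J u)`. -/
noncomputable def Yop : Module.End k ((Fin (n+1) → k) × (Fin (n+1) → k)) :=
  (LinearMap.inr k _ _).comp (J.comp (LinearMap.fst k _ _))

lemma Xop_apply (w) : Xop k n w = (0, w.1) := rfl

lemma Yop_apply (w) : Yop k n w = (0, J w.1) := rfl

lemma Xop_mul_Xop : Xop k n * Xop k n = 0 := by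
  apply LinearMap.ext; intro w
  rw [Module.End.mul_apply, Xop_apply, Xop_apply]
  rfl

lemma Xop_mul_Yop : Xop k n * Yop k n = 0 := by
  apply LinearMap.ext; intro w
  rw [Module.End.mul_apply, Yop_apply, Xop_apply]
  rfl

lemma Yop_mul_Xop : Yop k n * Xop k n = 0 := by
  apply LinearMap.ext; intro w
  rw [Module.End.mul_apply, Xop_apply, Yop_apply]
  show ((0 : Fin (n+1) → k), J 0) = 0
  rw [map_zero]
  rfl

lemma Yop_mul_Yop : Yop k n * Yop k n = 0 := by
  apply LinearMap.ext; intro w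
  rw [Module.End.mul_apply, Yop_apply, Yop_apply]
  show ((0 : Fin (n+1) → k), J 0) = 0
  rw [map_zero]
  rfl

/-- The representation of the free algebra on `k^{n+1} ⊕ k^{n+1}`. -/
noncomputable def rho : FreeAlgebra k (Fin 2) →ₐ[k]
    Module.End k ((Fin (n+1) → k) × (Fin (n+1) → k)) :=
  FreeAlgebra.lift k ![Xop k n, Yop k n]

lemma rho_x : rho k n (FreeAlgebra.ι k (0 : Fin 2)) = Xop k n := by
  rw [rho, FreeAlgebra.lift_ι_apply]
  rfl

lemma rho_y : rho k n (FreeAlgebra.ι k (1 : Fin 2)) = Yop k n := by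
  rw [rho, FreeAlgebra.lift_ι_apply]
  rfl

lemma ideal_le_ker : gentleLocalIdeal k ≤ TwoSidedIdeal.ker (rho k n) := by
  intro x hx
  refine TwoSidedIdeal.mem_span_iff.mp hx _ ?_
  intro y hy
  simp only [Set.mem_insert_iff, Set.mem_singleton_iff] at hy
  rcases hy with h | h | h | h <;> subst h <;> rw [SetLike.mem_coe, TwoSidedIdeal.mem_ker, map_mul]
  · rw [rho_x, Xop_mul_Xop]
  · rw [rho_y, Yop_mul_Yop]
  · rw [rho_x, rho_y, Xop_mul_Yop]
  · rw [rho_y, rho_x, Yop_mul_Xop]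

/-- The induced representation of the quotient algebra. -/
noncomputable def rho' : GentleLocalAlgebra k →+*
    Module.End k ((Fin (n+1) → k) × (Fin (n+1) → k)) where
  toFun := fun x => Quotient.liftOn x (rho k n) (fun a b hab => by
    have hmem : a - b ∈ gentleLocalIdeal k :=
      (TwoSidedIdeal.rel_iff (gentleLocalIdeal k) a b).mp hab
    have h0 : rho k n (a - b) = 0 :=
      (TwoSidedIdeal.mem_ker _).mp (ideal_le_ker k n hmem)
    rw [map_sub] at h0
    exact sub_eq_zero.mp h0)
  map_one' := map_one (rho k n)
  map_mul' := fun x y => Quotient.inductionOn₂ x y fun a b => map_mul (rho k n) a b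
  map_zero' := map_zero (rho k n)
  map_add' := fun x y => Quotient.inductionOn₂ x y fun a b => map_add (rho k n) a b

lemma rho'_coe (f : FreeAlgebra k (Fin 2)) :
    rho' k n ((f : FreeAlgebra k (Fin 2)) : GentleLocalAlgebra k) = rho k n f := rfl

/-- The module structure on `k^{n+1} ⊕ k^{n+1}` over the gentle local algebra. -/
noncomputable instance modA :
    Module (GentleLocalAlgebra k) ((Fin (n+1) → k) × (Fin (n+1) → k)) :=
  Module.compHom _ (rho' k n)

lemma coe_smul_def (f : FreeAlgebra k (Fin 2)) (w : (Fin (n+1) → k) × (Fin (n+1) → k)) :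
    ((f : GentleLocalAlgebra k) • w) = rho k n f w := rfl

lemma algebra_smul (r : k) (w : (Fin (n+1) → k) × (Fin (n+1) → k)) :
    (algebraMap k (GentleLocalAlgebra k) r) • w = r • w := by
  have h1 : (algebraMap k (GentleLocalAlgebra k) r)
      = ((algebraMap k (FreeAlgebra k (Fin 2)) r : FreeAlgebra k (Fin 2)) :
          GentleLocalAlgebra k) := rfl
  rw [h1, coe_smul_def, AlgHom.commutes]
  rfl

lemma x_smul (w : (Fin (n+1) → k) × (Fin (n+1) → k)) :
    ((FreeAlgebra.ι k (0 : Fin 2) : FreeAlgebra k (Fin 2)) : GentleLocalAlgebra k) • w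
      = ((0 : Fin (n+1) → k), w.1) := by
  rw [coe_smul_def, rho_x, Xop_apply]

lemma y_smul (w : (Fin (n+1) → k) × (Fin (n+1) → k)) :
    ((FreeAlgebra.ι k (1 : Fin 2) : FreeAlgebra k (Fin 2)) : GentleLocalAlgebra k) • w
      = ((0 : Fin (n+1) → k), J w.1) := by
  rw [coe_smul_def, rho_y, Yop_apply]

end GentleRep

namespace GentleRep

variable (k : Type u) [Field k] (n : ℕ)

/-- An idempotent `A`-linear endomorphism of our module is `0` or the identity. -/
lemma idempotent_Alinear
    (φ : ((Fin (n+1) → k) × (Fin (n+1) → k)) →ₗ[GentleLocalAlgebra k]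
      ((Fin (n+1) → k) × (Fin (n+1) → k)))
    (hφ : ∀ w, φ (φ w) = φ w) : φ = 0 ∨ φ = LinearMap.id := by
  have hsmulk : ∀ (r : k) (w : (Fin (n+1) → k) × (Fin (n+1) → k)),
      φ (r • w) = r • φ w := by
    intro r w
    rw [← algebra_smul k n r w, map_smul, algebra_smul]
  set φk : ((Fin (n+1) → k) × (Fin (n+1) → k)) →ₗ[k]
      ((Fin (n+1) → k) × (Fin (n+1) → k)) :=
    { toFun := φ, map_add' := φ.map_add, map_smul' := hsmulk } with hφk
  set a : Module.End k (Fin (n+1) → k) :=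
    (LinearMap.fst k _ _) ∘ₗ φk ∘ₗ (LinearMap.inl k _ _) with ha
  set γ : Module.End k (Fin (n+1) → k) :=
    (LinearMap.snd k _ _) ∘ₗ φk ∘ₗ (LinearMap.inl k _ _) with hγdef
  have s1 : ∀ u : Fin (n+1) → k, φ (u, 0) = (a u, γ u) := fun u => rfl
  have s2 : ∀ v : Fin (n+1) → k, φ ((0 : Fin (n+1) → k), v) = (0, a v) := by
    intro v
    have hx := φ.map_smul
      ((FreeAlgebra.ι k (0 : Fin 2) : FreeAlgebra k (Fin 2)) : GentleLocalAlgebra k)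
      ((v, 0) : (Fin (n+1) → k) × (Fin (n+1) → k))
    rw [x_smul, x_smul, s1] at hx
    exact hx
  have hadd : ∀ u v : Fin (n+1) → k, φ (u, v) = (a u, γ u + a v) := by
    intro u v
    have hsplit : ((u, v) : (Fin (n+1) → k) × (Fin (n+1) → k))
        = (u, (0 : Fin (n+1) → k)) + ((0 : Fin (n+1) → k), v) := by
      simp
    rw [hsplit, map_add, s1, s2, Prod.mk_add_mk, add_zero]
  have haJ : a * J = J * a := by
    apply LinearMap.ext; intro u
    have hy := φ.map_smul
      ((FreeAlgebra.ι k (1 : Fin 2) : FreeAlgebra k (Fin 2)) : GentleLocalAlgebra k)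
      ((u, 0) : (Fin (n+1) → k) × (Fin (n+1) → k))
    rw [y_smul, y_smul, s1, s2] at hy
    have h2 := congrArg Prod.snd hy
    simpa [Module.End.mul_apply] using h2
  have haa : a * a = a := by
    apply LinearMap.ext; intro u
    have h := hφ (u, (0 : Fin (n+1) → k))
    rw [s1, hadd] at h
    have := congrArg Prod.fst h
    simpa [Module.End.mul_apply] using this
  have hγr : ∀ u, γ (a u) + a (γ u) = γ u := by
    intro u
    have h := hφ (u, (0 : Fin (n+1) → k))
    rw [s1, hadd] at h
    exact congrArg Prod.snd h
  rcases idempotent_of_comm_shift a haJ haa with h0 | h1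
  · left
    have hγ0 : ∀ u, γ u = 0 := by
      intro u
      have h := hγr u
      rw [h0] at h
      simpa using h.symm
    apply LinearMap.ext; intro w
    rw [show w = (w.1, w.2) from rfl, hadd, h0, hγ0]
    simp
  · right
    have hγ0 : ∀ u, γ u = 0 := by
      intro u
      have h := hγr u
      rw [h1] at h
      simpa using h
    apply LinearMap.ext; intro w
    rw [show w = (w.1, w.2) from rfl, hadd, h1, hγ0]
    simp

lemma indecModule :
    IndecomposableModule (GentleLocalAlgebra k) ((Fin (n+1) → k) × (Fin (n+1) → k)) := by
  constructor
  · infer_instance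
  · intro M₁ M₂ hinf hsup
    have hcompl : IsCompl M₁ M₂ := ⟨disjoint_iff.mpr hinf, codisjoint_iff.mpr hsup⟩
    set π : ((Fin (n+1) → k) × (Fin (n+1) → k)) →ₗ[GentleLocalAlgebra k]
        ((Fin (n+1) → k) × (Fin (n+1) → k)) :=
      M₁.subtype ∘ₗ (M₁.projectionOnto M₂ hcompl) with hπ
    have hidem : ∀ w, π (π w) = π w := by
      intro w
      have : π w = ((M₁.projectionOnto M₂ hcompl w : M₁) : _) := rfl
      rw [hπ]
      simp only [LinearMap.comp_apply, Submodule.subtype_apply]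
      rw [Submodule.projectionOnto_apply_left hcompl]
    rcases idempotent_Alinear k n π hidem with h | h
    · left
      rw [eq_bot_iff]
      intro x hx
      have h1 : π x = x := by
        rw [hπ]
        simp only [LinearMap.comp_apply, Submodule.subtype_apply]
        rw [Submodule.projectionOnto_apply_left hcompl ⟨x, hx⟩]
      rw [h] at h1
      simp only [LinearMap.zero_apply] at h1
      simpa [Submodule.mem_bot] using h1.symm
    · right
      rw [eq_bot_iff]
      intro x hx
      have h1 : π x = 0 := by
        rw [hπ]
        simp only [LinearMap.comp_apply, Submodule.subtype_apply]
        rw [Submodule.projectionOnto_apply_of_mem_right hcompl hx]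
        rfl
      rw [h] at h1
      simpa [Submodule.mem_bot] using h1

end GentleRep

namespace GentleRep

variable (k : Type u) [Field k] (n : ℕ)

/-- Restricting scalars along `k → A` recovers the standard `k`-module structure. -/
noncomputable def rsEquiv :
    RestrictScalars k (GentleLocalAlgebra k) ((Fin (n+1) → k) × (Fin (n+1) → k)) ≃ₗ[k]
      ((Fin (n+1) → k) × (Fin (n+1) → k)) :=
  AddEquiv.toLinearEquiv
    (RestrictScalars.addEquiv k (GentleLocalAlgebra k) _)
    (fun r x => by
      rw [RestrictScalars.smul_def, AddEquiv.apply_symm_apply]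
      exact algebra_smul k n r _)

lemma finrank_VV :
    Module.finrank k ((Fin (n+1) → k) × (Fin (n+1) → k)) = 2 * (n + 1) := by
  rw [Module.finrank_prod, Module.finrank_pi, Fintype.card_fin]
  ring

/-- An `A`-linear equivalence between our modules is in particular `k`-linear. -/
noncomputable def kEquivOfAEquiv {m n : ℕ}
    (e : ((Fin (m+1) → k) × (Fin (m+1) → k)) ≃ₗ[GentleLocalAlgebra k]
      ((Fin (n+1) → k) × (Fin (n+1) → k))) :
    ((Fin (m+1) → k) × (Fin (m+1) → k)) ≃ₗ[k] ((Fin (n+1) → k) × (Fin (n+1) → k)) :=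
  AddEquiv.toLinearEquiv e.toAddEquiv
    (fun r x => by
      show e (r • x) = r • e x
      rw [← algebra_smul k m r x, e.map_smul, algebra_smul k n])

end GentleRep


/-- The algebra `A = k⟨x,y⟩/(x², y², xy, yx)` is representation-infinite: it admits an
infinite family of pairwise non-isomorphic finite-dimensional indecomposable modules. -/
theorem gentleLocalAlgebra_representation_infinite (k : Type u) [Field k] :
    ∃ M : ℕ → ModuleCat.{u} (GentleLocalAlgebra k),
      (∀ n, @FiniteDimensional k (RestrictScalars k (GentleLocalAlgebra k) (M n)) _ _
          (RestrictScalars.module k (GentleLocalAlgebra k) (M n)) ∧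
        IndecomposableModule (GentleLocalAlgebra k) (M n)) ∧
      ∀ m n : ℕ, m ≠ n → IsEmpty ((M m) ≃ₗ[GentleLocalAlgebra k] (M n)) := by
  refine ⟨fun n => ModuleCat.of (GentleLocalAlgebra k)
    ((Fin (n+1) → k) × (Fin (n+1) → k)), fun n => ⟨?_, ?_⟩, ?_⟩
  · exact @Module.Finite.equiv k _ _ _ _ _ _
      (RestrictScalars.module k (GentleLocalAlgebra k) ((Fin (n+1) → k) × (Fin (n+1) → k))) _
      (GentleRep.rsEquiv k n).symm
  · exact GentleRep.indecModule k n
  · intro m n hmn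
    constructor
    intro e
    apply hmn
    have he := (GentleRep.kEquivOfAEquiv k e).finrank_eq
    rw [GentleRep.finrank_VV k m, GentleRep.finrank_VV k n] at he
    omega
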